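/- If ⋆ is a Fourier product in a coalgebra C, L is a left coideal of C and R is a right coideal of C, then R ⋆ L ⊆ R ∩ L. Consequently, if D and E are two distinct simple subcoalgebras of C, then D ⋆ E = 0. -/

import Mathlib

open TensorProduct Coalgebra

variable {C : Type*} [AddCommGroup C] [Module ℂ C] [Coalgebra ℂ C]

/-- `m` is a Fourier product: `Δ(c ⋆ d) = Σ (c ⋆ d₁) ⊗ d₂ = Σ c₁ ⊗ (c₂ ⋆ d)`. -/
def IsFourierProduct (m : C →ₗ[ℂ] C →ₗ[ℂ] C) : Prop :=
  ∀ c d : C,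
    Coalgebra.comul (R := ℂ) (m c d) =
      LinearMap.rTensor C (m c) (Coalgebra.comul (R := ℂ) d) ∧
    Coalgebra.comul (R := ℂ) (m c d) =
      LinearMap.lTensor C (m.flip d) (Coalgebra.comul (R := ℂ) c)

/-- `R` is a right coideal: `Δ(R) ⊆ R ⊗ C`. -/
def IsRightCoideal (R : Submodule ℂ C) : Prop :=
  ∀ x ∈ R, Coalgebra.comul (R := ℂ) x ∈ LinearMap.range (LinearMap.rTensor C R.subtype)

/-- `L` is a left coideal: `Δ(L) ⊆ C ⊗ L`. -/
def IsLeftCoideal (L : Submodule ℂ C) : Prop :=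
  ∀ x ∈ L, Coalgebra.comul (R := ℂ) x ∈ LinearMap.range (LinearMap.lTensor C L.subtype)

/-- `D` is a subcoalgebra: `Δ(D) ⊆ D ⊗ D`. -/
def IsSubcoalgebra (D : Submodule ℂ C) : Prop :=
  ∀ x ∈ D, Coalgebra.comul (R := ℂ) x ∈
    LinearMap.range (TensorProduct.map D.subtype D.subtype)

/-- `D` is a simple subcoalgebra: a minimal nonzero subcoalgebra. -/
def IsSimpleSubcoalgebra (D : Submodule ℂ C) : Prop :=
  IsSubcoalgebra D ∧ D ≠ ⊥ ∧ ∀ D' : Submodule ℂ C, D' ≤ D → IsSubcoalgebra D' → D' = ⊥ ∨ D' = D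

section Aux

omit [Coalgebra ℂ C] in
lemma aux_rid_mem (R : Submodule ℂ C) (g : C →ₗ[ℂ] ℂ) (t : R ⊗[ℂ] C) :
    (TensorProduct.rid ℂ C) (TensorProduct.map R.subtype g t) ∈ R := by
  induction t with
  | zero => simp
  | tmul r c => simpa using R.smul_mem (g c) r.2
  | add a b ha hb => simpa using R.add_mem ha hb

omit [Coalgebra ℂ C] in
lemma aux_lid_mem (L : Submodule ℂ C) (g : C →ₗ[ℂ] ℂ) (t : C ⊗[ℂ] L) :
    (TensorProduct.lid ℂ C) (TensorProduct.map g L.subtype t) ∈ L := by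
  induction t with
  | zero => simp
  | tmul c l => simpa using L.smul_mem (g c) l.2
  | add a b ha hb => simpa using L.add_mem ha hb

lemma aux_comp_r (S : Submodule ℂ C) (f : C →ₗ[ℂ] C) (t : S ⊗[ℂ] C) :
    (Coalgebra.counit (R := ℂ)).lTensor C
        (LinearMap.lTensor C f (LinearMap.rTensor C S.subtype t))
      = TensorProduct.map S.subtype ((Coalgebra.counit (R := ℂ)) ∘ₗ f) t := by
  induction t with
  | zero => simp
  | tmul r c => simp
  | add a b ha hb => simp only [map_add, ha, hb]

lemma aux_comp_l (S : Submodule ℂ C) (f : C →ₗ[ℂ] C) (t : C ⊗[ℂ] S) :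
    (Coalgebra.counit (R := ℂ)).rTensor C
        (LinearMap.rTensor C f (LinearMap.lTensor C S.subtype t))
      = TensorProduct.map ((Coalgebra.counit (R := ℂ)) ∘ₗ f) S.subtype t := by
  induction t with
  | zero => simp
  | tmul r c => simp
  | add a b ha hb => simp only [map_add, ha, hb]

omit [Coalgebra ℂ C] in
lemma prodLeft_rTensor_prod {P Q : Type*} [AddCommGroup P] [AddCommGroup Q]
    [Module ℂ P] [Module ℂ Q]
    (f : C →ₗ[ℂ] P) (g : C →ₗ[ℂ] Q) (u : C ⊗[ℂ] C) :
    TensorProduct.prodLeft ℂ ℂ P Q C (LinearMap.rTensor C (f.prod g) u)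
      = (LinearMap.rTensor C f u, LinearMap.rTensor C g u) := by
  induction u with
  | zero => simp; rfl
  | tmul a b => simp [LinearMap.prod]
  | add a b ha hb => simp only [map_add, ha, hb, Prod.mk_add_mk]

omit [Coalgebra ℂ C] in
lemma prod_tensor_zero {P Q : Type*} [AddCommGroup P] [AddCommGroup Q]
    [Module ℂ P] [Module ℂ Q]
    (f : C →ₗ[ℂ] P) (g : C →ₗ[ℂ] Q) (u : C ⊗[ℂ] C)
    (hf : LinearMap.rTensor C f u = 0) (hg : LinearMap.rTensor C g u = 0) :
    LinearMap.rTensor C (f.prod g) u = 0 := by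
  have : TensorProduct.prodLeft ℂ ℂ P Q C (LinearMap.rTensor C (f.prod g) u) = 0 := by
    rw [prodLeft_rTensor_prod, hf, hg]; rfl
  exact (map_eq_zero_iff _ (TensorProduct.prodLeft ℂ ℂ P Q C).injective).mp this

omit [Coalgebra ℂ C] in
lemma prodRight_lTensor_prod {P Q : Type*} [AddCommGroup P] [AddCommGroup Q]
    [Module ℂ P] [Module ℂ Q]
    (f : C →ₗ[ℂ] P) (g : C →ₗ[ℂ] Q) (u : C ⊗[ℂ] C) :
    TensorProduct.prodRight ℂ ℂ C P Q (LinearMap.lTensor C (f.prod g) u)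
      = (LinearMap.lTensor C f u, LinearMap.lTensor C g u) := by
  induction u with
  | zero => simp; rfl
  | tmul a b => simp [LinearMap.prod]
  | add a b ha hb => simp only [map_add, ha, hb, Prod.mk_add_mk]

omit [Coalgebra ℂ C] in
lemma prod_tensor_zero' {P Q : Type*} [AddCommGroup P] [AddCommGroup Q]
    [Module ℂ P] [Module ℂ Q]
    (f : C →ₗ[ℂ] P) (g : C →ₗ[ℂ] Q) (u : C ⊗[ℂ] C)
    (hf : LinearMap.lTensor C f u = 0) (hg : LinearMap.lTensor C g u = 0) :
    LinearMap.lTensor C (f.prod g) u = 0 := by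
  have : TensorProduct.prodRight ℂ ℂ C P Q (LinearMap.lTensor C (f.prod g) u) = 0 := by
    rw [prodRight_lTensor_prod, hf, hg]; rfl
  exact (map_eq_zero_iff _ (TensorProduct.prodRight ℂ ℂ C P Q).injective).mp this

omit [Coalgebra ℂ C] in
lemma quot_prod_inj (D E : Submodule ℂ C) :
    Function.Injective
      ((((D ⊓ E).mapQ D LinearMap.id inf_le_left).prod
        ((D ⊓ E).mapQ E LinearMap.id inf_le_right))) := by
  rw [← LinearMap.ker_eq_bot, LinearMap.ker_eq_bot']
  intro q hq
  induction q using Submodule.Quotient.induction_on with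
  | H x =>
    simp only [LinearMap.prod_apply, Pi.prod, Prod.mk_eq_zero, Function.prod, Prod.ext_iff, Prod.fst_zero, Prod.snd_zero] at hq
    obtain ⟨h1, h2⟩ := hq
    rw [Submodule.mapQ_apply] at h1 h2
    rw [Submodule.Quotient.mk_eq_zero] at h1 h2 ⊢
    exact ⟨h1, h2⟩

omit [Coalgebra ℂ C] in
lemma rTensor_inter (D E : Submodule ℂ C) (u : C ⊗[ℂ] C)
    (hD : u ∈ LinearMap.range (LinearMap.rTensor C D.subtype))
    (hE : u ∈ LinearMap.range (LinearMap.rTensor C E.subtype)) :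
    u ∈ LinearMap.range (LinearMap.rTensor C (D ⊓ E).subtype) := by
  set F := D ⊓ E
  have exF : Function.Exact (LinearMap.rTensor C F.subtype) (LinearMap.rTensor C F.mkQ) :=
    Module.Flat.rTensor_exact C (LinearMap.exact_subtype_mkQ F)
  have exD : Function.Exact (LinearMap.rTensor C D.subtype) (LinearMap.rTensor C D.mkQ) :=
    Module.Flat.rTensor_exact C (LinearMap.exact_subtype_mkQ D)
  have exE : Function.Exact (LinearMap.rTensor C E.subtype) (LinearMap.rTensor C E.mkQ) :=
    Module.Flat.rTensor_exact C (LinearMap.exact_subtype_mkQ E)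
  have hD0 : LinearMap.rTensor C D.mkQ u = 0 := by
    obtain ⟨t, ht⟩ := hD; exact (exD u).mpr ⟨t, ht⟩
  have hE0 : LinearMap.rTensor C E.mkQ u = 0 := by
    obtain ⟨t, ht⟩ := hE; exact (exE u).mpr ⟨t, ht⟩
  let j : (C ⧸ F) →ₗ[ℂ] (C ⧸ D) × (C ⧸ E) :=
    (F.mapQ D LinearMap.id inf_le_left).prod (F.mapQ E LinearMap.id inf_le_right)
  have hj : Function.Injective j := quot_prod_inj D E
  have hcomp : j ∘ₗ F.mkQ = (D.mkQ).prod (E.mkQ) := by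
    ext x <;> simp [j, Submodule.mapQ_apply]
  have h0 : LinearMap.rTensor C (j ∘ₗ F.mkQ) u = 0 := by
    rw [hcomp]
    exact prod_tensor_zero _ _ _ hD0 hE0
  rw [LinearMap.rTensor_comp, LinearMap.comp_apply] at h0
  have hF0 : LinearMap.rTensor C F.mkQ u = 0 := by
    have hinj := Module.Flat.rTensor_preserves_injective_linearMap (M := C) j hj
    exact hinj (by rw [h0, map_zero])
  obtain ⟨t, ht⟩ := (exF u).mp hF0
  exact ⟨t, ht⟩

omit [Coalgebra ℂ C] in
lemma lTensor_inter (D E : Submodule ℂ C) (u : C ⊗[ℂ] C)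
    (hD : u ∈ LinearMap.range (LinearMap.lTensor C D.subtype))
    (hE : u ∈ LinearMap.range (LinearMap.lTensor C E.subtype)) :
    u ∈ LinearMap.range (LinearMap.lTensor C (D ⊓ E).subtype) := by
  set F := D ⊓ E
  have exF : Function.Exact (LinearMap.lTensor C F.subtype) (LinearMap.lTensor C F.mkQ) :=
    Module.Flat.lTensor_exact C (LinearMap.exact_subtype_mkQ F)
  have exD : Function.Exact (LinearMap.lTensor C D.subtype) (LinearMap.lTensor C D.mkQ) :=
    Module.Flat.lTensor_exact C (LinearMap.exact_subtype_mkQ D)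
  have exE : Function.Exact (LinearMap.lTensor C E.subtype) (LinearMap.lTensor C E.mkQ) :=
    Module.Flat.lTensor_exact C (LinearMap.exact_subtype_mkQ E)
  have hD0 : LinearMap.lTensor C D.mkQ u = 0 := by
    obtain ⟨t, ht⟩ := hD; exact (exD u).mpr ⟨t, ht⟩
  have hE0 : LinearMap.lTensor C E.mkQ u = 0 := by
    obtain ⟨t, ht⟩ := hE; exact (exE u).mpr ⟨t, ht⟩
  let j : (C ⧸ F) →ₗ[ℂ] (C ⧸ D) × (C ⧸ E) :=
    (F.mapQ D LinearMap.id inf_le_left).prod (F.mapQ E LinearMap.id inf_le_right)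
  have hj : Function.Injective j := quot_prod_inj D E
  have hcomp : j ∘ₗ F.mkQ = (D.mkQ).prod (E.mkQ) := by
    ext x <;> simp [j, Submodule.mapQ_apply]
  have h0 : LinearMap.lTensor C (j ∘ₗ F.mkQ) u = 0 := by
    rw [hcomp]
    exact prod_tensor_zero' _ _ _ hD0 hE0
  rw [LinearMap.lTensor_comp, LinearMap.comp_apply] at h0
  have hF0 : LinearMap.lTensor C F.mkQ u = 0 := by
    have hinj := Module.Flat.lTensor_preserves_injective_linearMap (M := C) j hj
    exact hinj (by rw [h0, map_zero])
  obtain ⟨t, ht⟩ := (exF u).mp hF0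
  exact ⟨t, ht⟩

omit [Coalgebra ℂ C] in
/-- An element of `F ⊗ C ∩ C ⊗ F` lies in `F ⊗ F`. -/
lemma inter_to_map (F : Submodule ℂ C) (u : C ⊗[ℂ] C)
    (hr : u ∈ LinearMap.range (LinearMap.rTensor C F.subtype))
    (hl : u ∈ LinearMap.range (LinearMap.lTensor C F.subtype)) :
    u ∈ LinearMap.range (TensorProduct.map F.subtype F.subtype) := by
  obtain ⟨t, ht⟩ := hr
  have exl : Function.Exact (LinearMap.lTensor C F.subtype) (LinearMap.lTensor C F.mkQ) :=
    Module.Flat.lTensor_exact C (LinearMap.exact_subtype_mkQ F)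
  have hu0 : LinearMap.lTensor C F.mkQ u = 0 := by
    obtain ⟨s, hs⟩ := hl; exact (exl u).mpr ⟨s, hs⟩
  have hcomm : LinearMap.lTensor C F.mkQ (LinearMap.rTensor C F.subtype t)
      = LinearMap.rTensor (C ⧸ F) F.subtype (LinearMap.lTensor (↥F) F.mkQ t) := by
    rw [← LinearMap.comp_apply, ← LinearMap.comp_apply,
      LinearMap.lTensor_comp_rTensor, LinearMap.rTensor_comp_lTensor]
  have ht0 : LinearMap.lTensor (↥F) F.mkQ t = 0 := by
    have hinj := Module.Flat.rTensor_preserves_injective_linearMap (M := C ⧸ F)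
      F.subtype F.injective_subtype
    apply hinj
    rw [map_zero, ← hcomm, ht, hu0]
  have exl' : Function.Exact (LinearMap.lTensor (↥F) F.subtype)
      (LinearMap.lTensor (↥F) F.mkQ) :=
    Module.Flat.lTensor_exact (↥F) (LinearMap.exact_subtype_mkQ F)
  obtain ⟨s, hs⟩ := (exl' t).mp ht0
  refine ⟨s, ?_⟩
  rw [← ht, ← hs, ← LinearMap.comp_apply, LinearMap.rTensor_comp_lTensor]

omit [Coalgebra ℂ C] in
lemma map_sub_rTensor (D : Submodule ℂ C) (u : C ⊗[ℂ] C)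
    (h : u ∈ LinearMap.range (TensorProduct.map D.subtype D.subtype)) :
    u ∈ LinearMap.range (LinearMap.rTensor C D.subtype) := by
  obtain ⟨t, ht⟩ := h
  exact ⟨LinearMap.lTensor (↥D) D.subtype t, by
    rw [← LinearMap.comp_apply, LinearMap.rTensor_comp_lTensor, ht]⟩

omit [Coalgebra ℂ C] in
lemma map_sub_lTensor (D : Submodule ℂ C) (u : C ⊗[ℂ] C)
    (h : u ∈ LinearMap.range (TensorProduct.map D.subtype D.subtype)) :
    u ∈ LinearMap.range (LinearMap.lTensor C D.subtype) := by
  obtain ⟨t, ht⟩ := h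
  exact ⟨LinearMap.rTensor (↥D) D.subtype t, by
    rw [← LinearMap.comp_apply, LinearMap.lTensor_comp_rTensor, ht]⟩

end Aux

/-- for a Fourier product `⋆`, a right coideal `R` and a left coideal `L`,
`R ⋆ L ⊆ R ∩ L`; consequently two distinct simple subcoalgebras satisfy `D ⋆ E = 0`. -/
theorem fourierProduct_coideal_inter (m : C →ₗ[ℂ] C →ₗ[ℂ] C) (hm : IsFourierProduct m) :
    (∀ (R L : Submodule ℂ C), IsRightCoideal R → IsLeftCoideal L →
      ∀ x ∈ R, ∀ y ∈ L, m x y ∈ R ⊓ L) ∧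
    (∀ (D E : Submodule ℂ C), IsSimpleSubcoalgebra D → IsSimpleSubcoalgebra E → D ≠ E →
      ∀ x ∈ D, ∀ y ∈ E, m x y = 0) := by
  have part1 : ∀ (R L : Submodule ℂ C), IsRightCoideal R → IsLeftCoideal L →
      ∀ x ∈ R, ∀ y ∈ L, m x y ∈ R ⊓ L := by
    intro R L hR hL x hx y hy
    constructor
    · -- m x y ∈ R
      obtain ⟨t, ht⟩ := hR x hx
      have key : m x y =
          (TensorProduct.rid ℂ C) (TensorProduct.map R.subtype
            ((Coalgebra.counit (R := ℂ)) ∘ₗ (m.flip y)) t) := by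
        have h1 : (Coalgebra.counit (R := ℂ)).lTensor C (Coalgebra.comul (R := ℂ) (m x y))
            = (m x y) ⊗ₜ[ℂ] 1 := Coalgebra.lTensor_counit_comul _
        have h2 : Coalgebra.comul (R := ℂ) (m x y)
            = LinearMap.lTensor C (m.flip y) (LinearMap.rTensor C R.subtype t) := by
          rw [(hm x y).2, ht]
        rw [h2, aux_comp_r] at h1
        calc m x y = (TensorProduct.rid ℂ C) ((m x y) ⊗ₜ[ℂ] 1) := by simp
        _ = _ := by rw [← h1]
      rw [key]; exact aux_rid_mem _ _ _
    · -- m x y ∈ L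
      obtain ⟨t, ht⟩ := hL y hy
      have key : m x y =
          (TensorProduct.lid ℂ C) (TensorProduct.map
            ((Coalgebra.counit (R := ℂ)) ∘ₗ (m x)) L.subtype t) := by
        have h1 : (Coalgebra.counit (R := ℂ)).rTensor C (Coalgebra.comul (R := ℂ) (m x y))
            = 1 ⊗ₜ[ℂ] (m x y) := Coalgebra.rTensor_counit_comul _
        have h2 : Coalgebra.comul (R := ℂ) (m x y)
            = LinearMap.rTensor C (m x) (LinearMap.lTensor C L.subtype t) := by
          rw [(hm x y).1, ht]
        rw [h2, aux_comp_l] at h1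
        calc m x y = (TensorProduct.lid ℂ C) ((1 : ℂ) ⊗ₜ[ℂ] (m x y)) := by simp
        _ = _ := by rw [← h1]
      rw [key]; exact aux_lid_mem _ _ _
  refine ⟨part1, ?_⟩
  intro D E hD hE hne x hx y hy
  -- F = D ⊓ E is a subcoalgebra
  have hFsub : IsSubcoalgebra (D ⊓ E) := by
    intro z hz
    have hzD := hD.1 z hz.1
    have hzE := hE.1 z hz.2
    have hr : Coalgebra.comul (R := ℂ) z ∈
        LinearMap.range (LinearMap.rTensor C (D ⊓ E).subtype) :=
      rTensor_inter D E _ (map_sub_rTensor D _ hzD) (map_sub_rTensor E _ hzE)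
    have hl : Coalgebra.comul (R := ℂ) z ∈
        LinearMap.range (LinearMap.lTensor C (D ⊓ E).subtype) :=
      lTensor_inter D E _ (map_sub_lTensor D _ hzD) (map_sub_lTensor E _ hzE)
    exact inter_to_map _ _ hr hl
  -- F = ⊥
  have hFbot : D ⊓ E = ⊥ := by
    rcases hD.2.2 (D ⊓ E) inf_le_left hFsub with h | h
    · exact h
    · exfalso
      have hDE : D ≤ E := h ▸ inf_le_right
      rcases hE.2.2 D hDE hD.1 with h' | h'
      · exact hD.2.1 h'
      · exact hne h'
  -- D is a right coideal, E a left coideal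
  have hDr : IsRightCoideal D := fun z hz => map_sub_rTensor D _ (hD.1 z hz)
  have hEl : IsLeftCoideal E := fun z hz => map_sub_lTensor E _ (hE.1 z hz)
  have := part1 D E hDr hEl x hx y hy
  rw [hFbot] at this
  exact this
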